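/- With random edge placement to p clusters, the expected replication factor (1/|V|)·Σ_{v∈V} E[|A(v)|] equals p - (p/|V|)·Σ_{v∈V} E[((p-1)/p)^{D[v]}], where D[v] is the degree of v. -/

import Mathlib

lemma card_image_eq_sum {E : Type} [Fintype E] [DecidableEq E] {p : ℕ}
    (f : E → Fin p) (S : Finset E) :
    ((S.image f).card : ℝ) =
      ∑ c : Fin p, (1 - ∏ e ∈ S, (if f e = c then (0:ℝ) else 1)) := by
  have h1 : ∀ c : Fin p, (∏ e ∈ S, (if f e = c then (0:ℝ) else 1)) =
      if c ∈ S.image f then 0 else 1 := by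
    intro c
    by_cases hc : c ∈ S.image f
    · rw [if_pos hc]
      obtain ⟨e, he, hfe⟩ := Finset.mem_image.mp hc
      exact Finset.prod_eq_zero he (by simp [hfe])
    · rw [if_neg hc]
      apply Finset.prod_eq_one
      intro e he
      rw [if_neg]
      exact fun h => hc (Finset.mem_image.mpr ⟨e, he, h⟩)
  simp only [h1]
  have h2 : ∀ c : Fin p, (1 - if c ∈ S.image f then (0:ℝ) else 1) =
      if c ∈ S.image f then 1 else 0 := by intro c; split <;> ring
  simp only [h2, Finset.sum_boole, Finset.filter_univ_mem]

lemma sum_prod_avoid {E : Type} [Fintype E] [DecidableEq E] {p : ℕ}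
    (S : Finset E) (c : Fin p) :
    ∑ f : E → Fin p, ∏ e ∈ S, (if f e = c then (0:ℝ) else 1) =
      ((p:ℝ) - 1) ^ S.card * (p:ℝ) ^ (Fintype.card E - S.card) := by
  have hext : ∀ f : E → Fin p, (∏ e ∈ S, (if f e = c then (0:ℝ) else 1)) =
      ∏ e : E, (if e ∈ S then (if f e = c then (0:ℝ) else 1) else 1) := by
    intro f
    rw [Finset.prod_ite_mem, Finset.univ_inter]
  simp only [hext]
  have key := Finset.sum_prod_piFinset (Finset.univ : Finset (Fin p))
    (fun (e : E) (j : Fin p) => if e ∈ S then (if j = c then (0:ℝ) else 1) else 1)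
  rw [Fintype.piFinset_univ] at key
  rw [key]
  have hfac : ∀ e : E, (∑ j : Fin p, if e ∈ S then (if j = c then (0:ℝ) else 1) else 1)
      = if e ∈ S then (p:ℝ) - 1 else (p:ℝ) := by
    intro e
    by_cases he : e ∈ S
    · simp only [he, if_true]
      have : ∀ j : Fin p, (if j = c then (0:ℝ) else 1) = 1 - (if j = c then 1 else 0) := by
        intro j; split <;> ring
      simp [this, Finset.sum_sub_distrib, Finset.sum_ite_eq', Finset.card_univ]
    · simp [he, Finset.card_univ]
  simp only [hfac]
  rw [Finset.prod_ite, Finset.prod_const, Finset.prod_const]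
  congr 1
  · congr 1; simp [Finset.filter_univ_mem]
  · congr 1
    rw [Finset.filter_not, Finset.filter_univ_mem, Finset.card_univ_diff]

lemma sum_card_image {E : Type} [Fintype E] [DecidableEq E] {p : ℕ} (hp : 1 ≤ p)
    (S : Finset E) :
    ∑ f : E → Fin p, ((S.image f).card : ℝ) =
      (p:ℝ) ^ (Fintype.card E) * ((p:ℝ) - (p:ℝ) * (((p:ℝ) - 1) / (p:ℝ)) ^ S.card) := by
  have hp0 : (0:ℝ) < (p:ℝ) := by exact_mod_cast hp
  have hd : S.card ≤ Fintype.card E := by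
    simpa [Finset.card_univ] using Finset.card_le_card (Finset.subset_univ S)
  simp only [card_image_eq_sum]
  rw [Finset.sum_comm]
  have hone : ∑ _f : E → Fin p, (1:ℝ) = (p:ℝ) ^ (Fintype.card E) := by
    simp [Finset.card_univ, Fintype.card_fun]
  have hc : ∀ c : Fin p,
      ∑ f : E → Fin p, (1 - ∏ e ∈ S, (if f e = c then (0:ℝ) else 1)) =
      (p:ℝ) ^ (Fintype.card E) - ((p:ℝ) - 1) ^ S.card * (p:ℝ) ^ (Fintype.card E - S.card) := by
    intro c
    rw [Finset.sum_sub_distrib, hone, sum_prod_avoid]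
  simp only [hc, Finset.sum_const, Finset.card_univ, Fintype.card_fin, nsmul_eq_mul]
  have hpow : (p:ℝ) ^ (Fintype.card E) = (p:ℝ) ^ (Fintype.card E - S.card) * (p:ℝ) ^ S.card := by
    rw [← pow_add, Nat.sub_add_cancel hd]
  rw [div_pow, hpow]
  symm
  have h := div_mul_cancel₀ (((p:ℝ) - 1) ^ S.card) (pow_ne_zero S.card hp0.ne')
  calc ((p:ℝ) ^ (Fintype.card E - S.card) * (p:ℝ) ^ S.card) *
        ((p:ℝ) - (p:ℝ) * (((p:ℝ) - 1) ^ S.card / (p:ℝ) ^ S.card))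
      = (p:ℝ) * ((p:ℝ) ^ (Fintype.card E - S.card) * (p:ℝ) ^ S.card) -
        (p:ℝ) * ((((p:ℝ) - 1) ^ S.card / (p:ℝ) ^ S.card * (p:ℝ) ^ S.card) *
          (p:ℝ) ^ (Fintype.card E - S.card)) := by ring
    _ = _ := by rw [h]; ring

/-- With random edge placement into `p` clusters, the expected replication factor
`(1/|V|) Σ_v E[|A(v)|]` equals `p - (p/|V|) Σ_v E[((p-1)/p)^{D[v]}]`, where `A(v)` is
the set of clusters containing an edge incident to `v` and `D[v]` is the degree of `v`.
Edges are modeled by a finite type `E` with an incidence relation `inc`, and the random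
assignment by averaging over all functions `E → Fin p`. -/
theorem random_cut_expected_replication_factor
    (V E : Type) [Fintype V] [Fintype E] [DecidableEq E] [Nonempty V]
    (inc : E → V → Prop) [∀ e v, Decidable (inc e v)]
    (p : ℕ) (hp : 1 ≤ p) :
    (∑ f : E → Fin p, (1 / (Fintype.card V : ℝ)) *
        ∑ v : V, (((Finset.univ.filter (fun e => inc e v)).image f).card : ℝ)) /
      (p : ℝ) ^ (Fintype.card E) =
    (p : ℝ) - ((p : ℝ) / (Fintype.card V : ℝ)) *
        ∑ v : V, (((p : ℝ) - 1) / (p : ℝ)) ^ ((Finset.univ.filter (fun e => inc e v)).card) := by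
  have hp0 : (0:ℝ) < (p:ℝ) := by exact_mod_cast hp
  have hV : (0:ℝ) < (Fintype.card V : ℝ) := by
    exact_mod_cast Fintype.card_pos
  have hPE : (0:ℝ) < (p:ℝ) ^ (Fintype.card E) := pow_pos hp0 _
  rw [← Finset.mul_sum, Finset.sum_comm]
  have hv : ∀ v : V,
      ∑ f : E → Fin p, (((Finset.univ.filter (fun e => inc e v)).image f).card : ℝ) =
      (p:ℝ) ^ (Fintype.card E) * ((p:ℝ) - (p:ℝ) *
        (((p:ℝ) - 1) / (p:ℝ)) ^ ((Finset.univ.filter (fun e => inc e v)).card)) :=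
    fun v => sum_card_image hp _
  simp only [hv]
  rw [← Finset.mul_sum, Finset.sum_sub_distrib, Finset.sum_const, Finset.card_univ,
    nsmul_eq_mul, ← Finset.mul_sum]
  field_simp
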